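/- Let P have length m, T have length n ≤ 3m/2, Q have length q, and set d := δ_H(P, Q*) and, for 0 ≤ j ≤ (n−m)/q, h_j := δ_H(T[jq..jq+m), P). Then for each such j, h_j = δ_H(P,Q*) + δ_H(T[jq..jq+m), Q*) − μ_j, where μ_j is the total weight of pairs (τ, π) with τ ∈ Mis(T,Q*), π ∈ Mis(P,Q*), τ = jq + π, each pair weighted 2 − δ_H(P[π], T[τ]). -/

import Mathlib

open List

variable {α : Type*}

/-- The fragment S[i..j) of a string (list) S. -/
def frag (S : List α) (i j : ℕ) : List α := (S.drop i).take (j - i)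

/-- Q^∞[a..b): the fragment of the infinite repetition of Q from a (incl.) to b (excl.). -/
def repPrefix [Inhabited α] (Q : List α) (a b : ℕ) : List α :=
  (List.range' a (b - a)).map (fun i => Q.getD (i % Q.length) default)

/-- Hamming distance of two strings of the same length (counted over positions of S). -/
def hamming [DecidableEq α] [Inhabited α] (S T : List α) : ℕ :=
  ((Finset.range S.length).filter
    (fun i => S.getD i default ≠ T.getD i default)).card

/-- δ_H(S, Q*): Hamming distance of S to the length-|S| prefix of Q^∞. -/
def hammingStar [DecidableEq α] [Inhabited α] (S Q : List α) : ℕ :=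
  hamming S (repPrefix Q 0 S.length)

/-- Cost structure for edit distance (re-created: removed from Mathlib). -/
structure Levenshtein.Cost (α β δ : Type*) where
  delete : α → δ
  insert : β → δ
  substitute : α → β → δ

/-- Unit-cost edit operations (as in the old Mathlib `Levenshtein.defaultCost`). -/
def Levenshtein.defaultCost [DecidableEq α] : Levenshtein.Cost α α ℕ where
  delete _ := 1
  insert _ := 1
  substitute a b := if a = b then 0 else 1

/-- Levenshtein distance with costs `C` (re-created: removed from Mathlib). -/
def levenshtein {β δ : Type*} [AddZeroClass δ] [Min δ] (C : Levenshtein.Cost α β δ) :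
    List α → List β → δ
  | [], ys => (ys.map C.insert).sum
  | x :: xs, [] => C.delete x + levenshtein C xs []
  | x :: xs, y :: ys =>
      min (C.delete x + levenshtein C xs (y :: ys))
        (min (C.insert y + levenshtein C (x :: xs) ys) (C.substitute x y + levenshtein C xs ys))

/-- Edit (Levenshtein) distance. -/
def editDist [DecidableEq α] (S T : List α) : ℕ :=
  levenshtein Levenshtein.defaultCost S T

/-- A string is primitive if it is nonempty and not a proper power of a string. -/
def Primitive (Q : List α) : Prop :=
  Q ≠ [] ∧ ∀ (U : List α) (t : ℕ), 2 ≤ t → Q ≠ (List.replicate t U).flatten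

/-- p is a period of S. -/
def IsPeriod [Inhabited α] (p : ℕ) (S : List α) : Prop :=
  0 < p ∧ ∀ i, i + p < S.length → S.getD i default = S.getD (i + p) default

/-- per(S): the smallest period of S. -/
noncomputable def per [Inhabited α] (S : List α) : ℕ := sInf {p | IsPeriod p S}

/-- Occ^H_k(P,T): starting positions of k-mismatch occurrences of P in T. -/
def occH [DecidableEq α] [Inhabited α] (k : ℕ) (P T : List α) : Finset ℕ :=
  (Finset.range (T.length - P.length + 1)).filter
    (fun i => hamming P (frag T i (i + P.length)) ≤ k)

/-- Exact occurrences of B in T. -/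
def occExact [DecidableEq α] (B T : List α) : Finset ℕ :=
  (Finset.range (T.length + 1)).filter (fun i => frag T i (i + B.length) = B)

/-- Occ^E_k(P,T): starting positions of k-error (edit distance) occurrences of P in T. -/
def occE [DecidableEq α] (k : ℕ) (P T : List α) : Set ℕ :=
  {i | ∃ j, i ≤ j ∧ j ≤ T.length ∧ editDist P (frag T i j) ≤ k}

/-- δ_E^cyc(S,Q): minimum edit distance of S to any substring of Q^∞. -/
noncomputable def edCyc [DecidableEq α] [Inhabited α] (S Q : List α) : ℕ :=
  sInf {d | ∃ i j, i ≤ j ∧ d = editDist S (repPrefix Q i j)}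

/-- δ_E(S,Q*): minimum edit distance of S to a prefix of Q^∞. -/
noncomputable def edStar [DecidableEq α] [Inhabited α] (S Q : List α) : ℕ :=
  sInf {d | ∃ j, d = editDist S (repPrefix Q 0 j)}

/-- Minimum edit distance of T to a substring of Q^∞ starting at position x. -/
noncomputable def edStarAt [DecidableEq α] [Inhabited α] (T Q : List α) (x : ℕ) : ℕ :=
  sInf {d | ∃ j, x ≤ j ∧ d = editDist T (repPrefix Q x j)}

/-- Minimum edit distance of T to a substring of Q^∞ ending at a position ≡ y (mod |Q|). -/
noncomputable def edEndAt [DecidableEq α] [Inhabited α] (T Q : List α) (y : ℕ) : ℕ :=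
  sInf {d | ∃ i j, i ≤ j ∧ j % Q.length = y % Q.length ∧ d = editDist T (repPrefix Q i j)}

/-- Minimum edit distance of L to a substring of Q^∞ ending at a multiple of |Q|. -/
noncomputable def edEndMul [DecidableEq α] [Inhabited α] (L Q : List α) : ℕ :=
  sInf {d | ∃ i j, i ≤ j * Q.length ∧ d = editDist L (repPrefix Q i (j * Q.length))}

/-- The fragment S[i..j) of S is locked with respect to Q. -/
def Locked [DecidableEq α] [Inhabited α] (S Q : List α) (i j : ℕ) : Prop :=
  (∃ a : ℕ, edCyc (frag S i j) Q = editDist (frag S i j) (repPrefix Q 0 (a * Q.length))) ∨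
  (j = S.length ∧ edCyc (frag S i j) Q = edStar (frag S i j) Q) ∨
  (i = 0 ∧ edCyc (frag S i j) Q = edEndMul (frag S i j) Q) ∨
  (i = 0 ∧ j = S.length)

/-- rot^j(Q): rotation moving the last j (mod |Q|) characters to the front. -/
def rotR (Q : List α) (j : ℕ) : List α := Q.rotate (Q.length - j % Q.length)

/-- |Mis(T,Q*) ∩ [a,b)|. -/
def misCount [DecidableEq α] [Inhabited α] (T Q : List α) (a b : ℕ) : ℕ :=
  ((Finset.Ico a b).filter (fun i => i < T.length ∧
     T.getD i default ≠ Q.getD (i % Q.length) default)).card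

/-- μ_j: the total weight of aligned mismatch pairs of P and T against Q^∞ at shift j·|Q|:
a pair (τ = j|Q|+π, π) with π ∈ Mis(P,Q*), τ ∈ Mis(T,Q*) has weight 2 − δ_H(P[π],T[τ]). -/
def mu [DecidableEq α] [Inhabited α] (P T Q : List α) (j : ℕ) : ℕ :=
  ∑ π ∈ Finset.range P.length,
    if P.getD π default ≠ Q.getD (π % Q.length) default ∧
       j * Q.length + π < T.length ∧
       T.getD (j * Q.length + π) default ≠ Q.getD ((j * Q.length + π) % Q.length) default
    then (if P.getD π default = T.getD (j * Q.length + π) default then 2 else 1)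
    else 0

/-- h_j = δ_H(P,Q*) + δ_H(T[jq..jq+m),Q*) − μ_j, stated additively. -/
theorem hj_identity {α : Type*} [DecidableEq α] [Inhabited α]
    (P T Q : List α) (m n j : ℕ)
    (hP : P.length = m) (hT : T.length = n) (hq : Q ≠ [])
    (hmn : m ≤ n) (hn : 2 * n ≤ 3 * m) (hj : j * Q.length + m ≤ n) :
    hamming (frag T (j * Q.length) (j * Q.length + m)) P + mu P T Q j
      = hammingStar P Q + hammingStar (frag T (j * Q.length) (j * Q.length + m)) Q := by
  have hq0 : 0 < Q.length := List.length_pos_iff.mpr hq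
  set F := frag T (j*Q.length) (j*Q.length+m) with hF
  have hFlen : F.length = m := by
    simp only [hF, frag, List.length_take, List.length_drop]
    omega
  have hFget : ∀ i, i < m → F.getD i default = T.getD (j*Q.length+i) default := by
    intro i hi
    simp only [hF, frag, List.getD_eq_getElem?_getD, List.getElem?_take,
      List.getElem?_drop]
    have h1 : j*Q.length+m - (j*Q.length) = m := by omega
    rw [h1]
    simp [hi]
  have hrep : ∀ (L : ℕ) i, i < L → (repPrefix Q 0 L).getD i default
      = Q.getD (i % Q.length) default := by
    intro L i hi
    simp only [repPrefix, Nat.sub_zero, List.getD_eq_getElem?_getD,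
      List.getElem?_map]
    rw [List.getElem?_range' (s := 0) (step := 1) hi]
    simp
  have hmod : ∀ i : ℕ, (j * Q.length + i) % Q.length = i % Q.length := by
    intro i
    rw [add_comm, Nat.add_mul_mod_self_right]
  unfold hammingStar hamming mu
  rw [hP, hFlen, Finset.card_filter, Finset.card_filter, Finset.card_filter,
    ← Finset.sum_add_distrib, ← Finset.sum_add_distrib]
  apply Finset.sum_congr rfl
  intro i hi
  rw [Finset.mem_range] at hi
  rw [hFget i hi, hrep m i hi]
  simp only [hmod i]
  have hlt : j * Q.length + i < T.length := by omega
  simp only [hlt, true_and]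
  generalize P.getD i default = x
  generalize T.getD (j*Q.length+i) default = y
  generalize Q.getD (i % Q.length) default = z
  by_cases h1 : x = z <;> by_cases h2 : y = z <;> by_cases h3 : x = y <;>
    simp_all <;> (intro h; subst h; simp_all)
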